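/- Fix an integer m ≥ 2 and positive reals σ_1², …, σ_n². Let G^r be any reduced set for (σ_1², …, σ_n², m) with |G^r| ≥ 2m, and let L ⊆ G^r with |L| = 2m be a set of indices attaining the 2m largest values of σ_i² among i ∈ G^r. Then Ent(σ²_{G^r}) ≤ ln(2) + 33 · Ent(σ²_L). -/

import Mathlib

open Finset Real
open scoped Classical

/-- Entropy-like function `Ent(a_S) = -∑_{i∈S} (a_i/A) ln (a_i/A)` with `A = ∑_{j∈S} a_j`. -/
noncomputable def ent {ι : Type*} (S : Finset ι) (a : ι → ℝ) : ℝ :=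
  -∑ i ∈ S, (a i / ∑ j ∈ S, a j) * Real.log (a i / ∑ j ∈ S, a j)

/-- The minimum variance `σ̲² = min_{i∈[n]} σ_i²`. -/
noncomputable def sigMin (n : ℕ) [NeZero n] (σ : Fin n → ℝ) : ℝ :=
  Finset.univ.inf' Finset.univ_nonempty σ

/-- The `j`-th variance group `G_j = {i ∈ [n] : 2^{j-1} ≤ σ_i²/σ̲² < 2^j}` (for `j ≥ 1`). -/
noncomputable def grp (n : ℕ) [NeZero n] (σ : Fin n → ℝ) (j : ℕ) : Finset (Fin n) :=
  Finset.univ.filter fun i =>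
    (2 : ℝ) ^ (j - 1) ≤ σ i / sigMin n σ ∧ σ i / sigMin n σ < 2 ^ j

/-- `Gr` is a reduced set for `(σ², m)`: `Gr = ∪_j G'_j` where `G'_j = G_j` when
`|G_j| ≤ 2m`, and `G'_j` is an arbitrary `2m`-element subset of `G_j` otherwise. -/
def IsReducedSet (n : ℕ) [NeZero n] (m : ℕ) (σ : Fin n → ℝ) (Gr : Finset (Fin n)) : Prop :=
  ∃ G' : ℕ → Finset (Fin n),
    (∀ j : ℕ, 1 ≤ j →
      ((grp n σ j).card ≤ 2 * m → G' j = grp n σ j) ∧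
      (2 * m < (grp n σ j).card → G' j ⊆ grp n σ j ∧ (G' j).card = 2 * m)) ∧
    (Gr : Set (Fin n)) = ⋃ (j : ℕ) (_ : 1 ≤ j), (G' j : Set (Fin n))

lemma aux_exp_neg_one_lb : (1/4 : ℝ) ≤ Real.exp (-1) := by
  rw [Real.exp_neg, show (1/4:ℝ) = 4⁻¹ by norm_num,
    inv_le_inv₀ (by norm_num) (Real.exp_pos 1)]
  exact (Real.exp_one_lt_d9.le.trans (by norm_num))

lemma aux_exp_neg_one_ub : Real.exp (-1) ≤ (1/2 : ℝ) := by
  rw [Real.exp_neg, show (1/2:ℝ) = 2⁻¹ by norm_num,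
    inv_le_inv₀ (Real.exp_pos 1) (by norm_num)]
  linarith [Real.add_one_le_exp (1:ℝ)]

lemma aux_negMulLog_mono {a x : ℝ} (ha : 0 < a) (ha4 : a ≤ 1/4) (hax : a ≤ x)
    (hx2 : x ≤ 1/2) : Real.negMulLog a ≤ Real.negMulLog x := by
  have hmono : ∀ c d : ℝ, 0 < c → c ≤ d → d ≤ Real.exp (-1) →
      Real.negMulLog c ≤ Real.negMulLog d := by
    intro c d hc hcd hd
    have H : MonotoneOn Real.negMulLog (Set.Icc c (Real.exp (-1))) := by
      apply monotoneOn_of_deriv_nonneg (convex_Icc _ _)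
        Real.continuous_negMulLog.continuousOn
      · apply Real.differentiableOn_negMulLog.mono
        intro y hy
        rw [interior_Icc] at hy
        simp only [Set.mem_compl_iff, Set.mem_singleton_iff]
        exact ne_of_gt (lt_trans hc hy.1)
      · intro y hy
        rw [interior_Icc] at hy
        rw [Real.deriv_negMulLog (ne_of_gt (lt_trans hc hy.1))]
        have hylog : Real.log y ≤ -1 := by
          calc Real.log y ≤ Real.log (Real.exp (-1)) :=
                Real.log_le_log (lt_trans hc hy.1) hy.2.le
            _ = -1 := Real.log_exp _
        linarith
    exact H ⟨le_refl c, hcd.trans hd⟩ ⟨hcd, hd⟩ hcd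
  rcases le_or_gt x (Real.exp (-1)) with hcase | hcase
  · exact hmono a x ha hax hcase
  · have h1 : Real.negMulLog a ≤ Real.negMulLog (1/4) :=
      hmono a (1/4) ha ha4 aux_exp_neg_one_lb
    have h2 : Real.negMulLog (1/4 : ℝ) = Real.negMulLog (1/2 : ℝ) := by
      simp only [Real.negMulLog]
      rw [show (1/4 : ℝ) = (1/2)*(1/2) by norm_num, Real.log_mul (by norm_num) (by norm_num)]
      ring
    have H : AntitoneOn Real.negMulLog (Set.Icc (Real.exp (-1)) (1/2)) := by
      apply antitoneOn_of_deriv_nonpos (convex_Icc _ _)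
        Real.continuous_negMulLog.continuousOn
      · apply Real.differentiableOn_negMulLog.mono
        intro y hy
        rw [interior_Icc] at hy
        simp only [Set.mem_compl_iff, Set.mem_singleton_iff]
        exact ne_of_gt (lt_trans (Real.exp_pos _) hy.1)
      · intro y hy
        rw [interior_Icc] at hy
        rw [Real.deriv_negMulLog (ne_of_gt (lt_trans (Real.exp_pos _) hy.1))]
        have hylog : -1 ≤ Real.log y := by
          calc (-1 : ℝ) = Real.log (Real.exp (-1)) := (Real.log_exp _).symm
            _ ≤ Real.log y := Real.log_le_log (Real.exp_pos _) hy.1.le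
        linarith
    have h3 : Real.negMulLog (1/2 : ℝ) ≤ Real.negMulLog x :=
      H ⟨hcase.le, hx2⟩ ⟨aux_exp_neg_one_ub, le_refl _⟩ hx2
    linarith

lemma aux_log_le_div_e {y : ℝ} (hy : 0 < y) : Real.log y ≤ y / Real.exp 1 := by
  have h := Real.log_le_sub_one_of_pos (show 0 < y / Real.exp 1 by positivity)
  rw [Real.log_div (ne_of_gt hy) (ne_of_gt (Real.exp_pos 1)), Real.log_exp] at h
  linarith

lemma aux_sum_pow (J : ℕ) : ∑ j ∈ Finset.Icc 1 J, 2^j ≤ 2^(J+1) := by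
  induction J with
  | zero => simp
  | succ J ih =>
      rw [Finset.sum_Icc_succ_top (by omega)]
      calc ∑ j ∈ Finset.Icc 1 J, 2^j + 2^(J+1) ≤ 2^(J+1) + 2^(J+1) := by omega
        _ = 2^(J+2) := by ring

lemma aux_sum_pow_mul (J : ℕ) : ∑ j ∈ Finset.Icc 1 J, 2^j * (J+1-j) ≤ 2^(J+2) := by
  induction J with
  | zero => simp
  | succ J ih =>
      rw [Finset.sum_Icc_succ_top (by omega)]
      have h1 : ∀ j ∈ Finset.Icc 1 J, 2^j * (J+2-j) = 2^j * (J+1-j) + 2^j := by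
        intro j hj
        simp only [Finset.mem_Icc] at hj
        have : J+2-j = (J+1-j)+1 := by omega
        rw [this]; ring
      calc ∑ j ∈ Finset.Icc 1 J, 2^j * (J+1+1-j) + 2^(J+1) * (J+1+1-(J+1))
          = (∑ j ∈ Finset.Icc 1 J, (2^j * (J+1-j) + 2^j)) + 2^(J+1) := by
            rw [Finset.sum_congr rfl (by intro j hj; rw [show J+1+1-j = J+2-j from rfl, h1 j hj])]
            simp
        _ = (∑ j ∈ Finset.Icc 1 J, 2^j * (J+1-j)) + (∑ j ∈ Finset.Icc 1 J, 2^j) + 2^(J+1) := by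
            rw [Finset.sum_add_distrib]
        _ ≤ 2^(J+2) + 2^(J+1) + 2^(J+1) := by
            have := aux_sum_pow J; omega
        _ = 2^(J+1+2) := by ring

lemma ent_eq_sum {ι : Type*} (S : Finset ι) (a : ι → ℝ) :
    ent S a = ∑ i ∈ S, Real.negMulLog (a i / ∑ j ∈ S, a j) := by
  unfold ent
  rw [← Finset.sum_neg_distrib]
  exact Finset.sum_congr rfl fun i _ => by rw [Real.negMulLog]; ring

lemma ent_nonneg {ι : Type*} {S : Finset ι} {a : ι → ℝ} (h : ∀ i ∈ S, 0 ≤ a i) :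
    0 ≤ ent S a := by
  rw [ent_eq_sum]
  apply Finset.sum_nonneg
  intro i hi
  rcases eq_or_lt_of_le (Finset.sum_nonneg h : (0:ℝ) ≤ ∑ j ∈ S, a j) with hA | hA
  · rw [← hA, div_zero]
    simp
  · exact Real.negMulLog_nonneg (div_nonneg (h i hi) hA.le)
      ((div_le_one hA).mpr (Finset.single_le_sum h hi))

lemma mul_ent {ι : Type*} (S : Finset ι) (a : ι → ℝ) (h : ∀ i ∈ S, 0 < a i) :
    (∑ j ∈ S, a j) * ent S a
      = ∑ i ∈ S, a i * (Real.log (∑ j ∈ S, a j) - Real.log (a i)) := by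
  rcases S.eq_empty_or_nonempty with rfl | hS
  · simp [ent]
  · have hA : 0 < ∑ j ∈ S, a j := Finset.sum_pos h hS
    rw [ent_eq_sum, Finset.mul_sum]
    apply Finset.sum_congr rfl
    intro i hi
    rw [Real.negMulLog, Real.log_div (ne_of_gt (h i hi)) (ne_of_gt hA)]
    field_simp
    ring

set_option maxHeartbeats 2000000 in
/-- **Lemma.** For `m ≥ 2`, a reduced set `G^r` with `|G^r| ≥ 2m`, and `L ⊆ G^r` the
`2m` indices with the largest variances in `G^r`,
`Ent(σ²_{G^r}) ≤ ln 2 + 33 Ent(σ²_L)`. -/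
theorem stmt_9 (n m : ℕ) [NeZero n] (hm : 2 ≤ m)
    (σ : Fin n → ℝ) (hσ : ∀ i, 0 < σ i)
    (Gr : Finset (Fin n)) (hGr : IsReducedSet n m σ Gr) (hGrcard : 2 * m ≤ Gr.card)
    (L : Finset (Fin n)) (hLsub : L ⊆ Gr) (hLcard : L.card = 2 * m)
    (hLtop : ∀ i ∈ L, ∀ j ∈ Gr \ L, σ j ≤ σ i) :
    ent Gr σ ≤ Real.log 2 + 33 * ent L σ := by
  classical
  obtain ⟨G', hG'spec, hGrEq⟩ := hGr
  set s : ℝ := sigMin n σ with hs_def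
  have hs : 0 < s := by
    obtain ⟨i, -, hi⟩ := Finset.exists_mem_eq_inf' (Finset.univ_nonempty (α := Fin n)) σ
    rw [hs_def, sigMin, hi]; exact hσ i
  have hm2 : (2:ℝ) ≤ (m:ℝ) := by exact_mod_cast hm
  -- grp membership characterization
  have hgrp_mem : ∀ (j : ℕ) (i : Fin n),
      i ∈ grp n σ j ↔ (2:ℝ)^(j-1) * s ≤ σ i ∧ σ i < 2^j * s := by
    intro j i
    simp only [grp, Finset.mem_filter, Finset.mem_univ, true_and, ← hs_def]
    constructor
    · rintro ⟨h1, h2⟩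
      exact ⟨(le_div_iff₀ hs).mp h1, (div_lt_iff₀ hs).mp h2⟩
    · rintro ⟨h1, h2⟩
      exact ⟨(le_div_iff₀ hs).mpr h1, (div_lt_iff₀ hs).mpr h2⟩
  -- groups (with index ≥ 1) are pairwise disjoint
  have hgrp_disj : ∀ j j' : ℕ, 1 ≤ j → 1 ≤ j' → j ≠ j' →
      ∀ i, i ∈ grp n σ j → i ∈ grp n σ j' → False := by
    have key : ∀ j j' : ℕ, j < j' → ∀ i, i ∈ grp n σ j → i ∈ grp n σ j' → False := by
      intro j j' hlt i hij hij'
      rw [hgrp_mem] at hij hij'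
      have h2 : (2:ℝ)^j ≤ 2^(j'-1) := by
        apply pow_le_pow_right₀ (by norm_num) (by omega)
      nlinarith [hij.2, hij'.1, hs]
    intro j j' h1 h1' hne i hi hi'
    rcases lt_or_gt_of_ne hne with h | h
    · exact key j j' h i hi hi'
    · exact key j' j h i hi' hi
  have hG'sub : ∀ j, 1 ≤ j → G' j ⊆ grp n σ j := by
    intro j hj
    rcases le_or_gt (grp n σ j).card (2*m) with h | h
    · rw [(hG'spec j hj).1 h]
    · exact ((hG'spec j hj).2 h).1
  have hG'card : ∀ j, 1 ≤ j → (G' j).card ≤ 2*m := by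
    intro j hj
    rcases le_or_gt (grp n σ j).card (2*m) with h | h
    · rw [(hG'spec j hj).1 h]; exact h
    · rw [((hG'spec j hj).2 h).2]
  have hmemGr : ∀ i ∈ Gr, ∃ j, 1 ≤ j ∧ i ∈ G' j := by
    intro i hi
    have h : (i : Fin n) ∈ (Gr : Set (Fin n)) := hi
    rw [hGrEq] at h
    simpa using h
  -- any subset of Gr inside a single group has at most 2m elements
  have hcap : ∀ j, 1 ≤ j → ∀ T : Finset (Fin n), T ⊆ Gr →
      (∀ i ∈ T, i ∈ grp n σ j) → T.card ≤ 2*m := by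
    intro j hj T hTG hTg
    have hsub : T ⊆ G' j := by
      intro i hi
      obtain ⟨j', hj', hij'⟩ := hmemGr i (hTG hi)
      have hjj : j' = j := by
        by_contra hne
        exact hgrp_disj j' j hj' hj hne i (hG'sub j' hj' hij') (hTg i hi)
      rwa [hjj] at hij'
    exact le_trans (Finset.card_le_card hsub) (hG'card j hj)
  -- minimum of L
  have hLne : L.Nonempty := Finset.card_pos.mp (by omega)
  obtain ⟨it, hitL, hit⟩ := Finset.exists_min_image L σ hLne
  set t := σ it with ht_def
  have ht : 0 < t := hσ it
  obtain ⟨J, hJ1, hitG'⟩ := hmemGr it (hLsub hitL)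
  have hitgrp := hG'sub J hJ1 hitG'
  rw [hgrp_mem] at hitgrp
  have hJl : (2:ℝ)^(J-1) * s ≤ t := hitgrp.1
  have hJr : t < 2^J * s := hitgrp.2
  -- R = Gr \ L
  set R := Gr \ L with hR_def
  have hRt : ∀ i ∈ R, σ i ≤ t := fun i hi => hLtop it hitL i hi
  have hRGr : R ⊆ Gr := Finset.sdiff_subset
  -- sums
  set A := ∑ i ∈ Gr, σ i with hA_def
  set W := ∑ i ∈ L, σ i with hW_def
  set V := ∑ i ∈ R, σ i with hV_def
  have hAWV : V + W = A := Finset.sum_sdiff hLsub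
  have hWpos : 0 < W := Finset.sum_pos (fun i _ => hσ i) hLne
  have hVnn : 0 ≤ V := Finset.sum_nonneg fun i _ => (hσ i).le
  have hApos : 0 < A := by linarith
  have hWA : W ≤ A := by linarith
  have hmt : (2*(m:ℝ)) * t ≤ W := by
    have h := Finset.card_nsmul_le_sum L σ t (fun i hi => hit i hi)
    rw [hLcard] at h
    rw [nsmul_eq_mul] at h
    push_cast at h
    linarith
  have hm4t : 4 * t ≤ W := by nlinarith
  -- every element of R belongs to a group with index in [1, J]
  have hRcover : ∀ i ∈ R, ∃ j ∈ Finset.Icc 1 J, i ∈ grp n σ j := by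
    intro i hi
    obtain ⟨j, hj, hij⟩ := hmemGr i (hRGr hi)
    have hijg := hG'sub j hj hij
    refine ⟨j, ?_, hijg⟩
    rw [Finset.mem_Icc]
    refine ⟨hj, ?_⟩
    by_contra hcon
    push_neg at hcon
    have h1 : (2:ℝ)^J ≤ 2^(j-1) := pow_le_pow_right₀ (by norm_num) (by omega)
    rw [hgrp_mem] at hijg
    have h2 := hRt i hi
    nlinarith [hijg.1, hs]
  -- generic bound for sums over R via groups
  have hRsum : ∀ (g : Fin n → ℝ) (B : ℕ → ℝ),
      (∀ j ∈ Finset.Icc 1 J, (0:ℝ) ≤ B j) →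
      (∀ j ∈ Finset.Icc 1 J, ∀ i ∈ R, i ∈ grp n σ j → g i ≤ B j) →
      (∀ i ∈ R, 0 ≤ g i) →
      ∑ i ∈ R, g i ≤ ∑ j ∈ Finset.Icc 1 J, (2*(m:ℝ)) * B j := by
    intro g B hB0 hB hg
    have hdisj : ((Finset.Icc 1 J : Finset ℕ) : Set ℕ).PairwiseDisjoint
        (fun j => R ∩ grp n σ j) := by
      intro j hj j' hj' hne
      simp only [Finset.coe_Icc, Set.mem_Icc] at hj hj'
      refine Finset.disjoint_left.mpr ?_
      intro i hi hi'
      exact hgrp_disj j j' hj.1 hj'.1 hne i (Finset.mem_inter.mp hi).2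
        (Finset.mem_inter.mp hi').2
    have hsub : R ⊆ (Finset.Icc 1 J).biUnion (fun j => R ∩ grp n σ j) := by
      intro i hi
      obtain ⟨j, hj, hij⟩ := hRcover i hi
      exact Finset.mem_biUnion.mpr ⟨j, hj, Finset.mem_inter.mpr ⟨hi, hij⟩⟩
    calc ∑ i ∈ R, g i
        ≤ ∑ i ∈ (Finset.Icc 1 J).biUnion (fun j => R ∩ grp n σ j), g i := by
          apply Finset.sum_le_sum_of_subset_of_nonneg hsub
          intro i hi _
          obtain ⟨j, -, hij⟩ := Finset.mem_biUnion.mp hi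
          exact hg i (Finset.mem_inter.mp hij).1
      _ = ∑ j ∈ Finset.Icc 1 J, ∑ i ∈ R ∩ grp n σ j, g i := Finset.sum_biUnion hdisj
      _ ≤ ∑ j ∈ Finset.Icc 1 J, (2*(m:ℝ)) * B j := by
          apply Finset.sum_le_sum
          intro j hj
          have hcard : (R ∩ grp n σ j).card ≤ 2*m := by
            apply hcap j (Finset.mem_Icc.mp hj).1
            · exact fun i hi => hRGr (Finset.mem_inter.mp hi).1
            · exact fun i hi => (Finset.mem_inter.mp hi).2
          calc ∑ i ∈ R ∩ grp n σ j, g i ≤ (R ∩ grp n σ j).card • B j :=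
                Finset.sum_le_card_nsmul _ _ _
                  (fun i hi => hB j hj i (Finset.mem_inter.mp hi).1
                    (Finset.mem_inter.mp hi).2)
            _ ≤ (2*(m:ℝ)) * B j := by
                rw [nsmul_eq_mul]
                apply mul_le_mul_of_nonneg_right _ (hB0 j hj)
                exact_mod_cast hcard
  -- power facts
  have hpowJ : (2:ℝ)^(J+1) * s ≤ 4 * t := by
    have he : (2:ℝ)^(J+1) = 4 * 2^(J-1) := by
      rw [show J + 1 = (J-1) + 2 by omega, pow_add]
      ring
    rw [he]
    nlinarith [hJl]
  have hP1 : ∑ j ∈ Finset.Icc 1 J, (2:ℝ)^j ≤ 2^(J+1) := by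
    have h := (Nat.cast_le (α := ℝ)).mpr (aux_sum_pow J)
    push_cast at h
    exact h
  have hP2 : ∑ j ∈ Finset.Icc 1 J, (2:ℝ)^j * ((J+1-j : ℕ) : ℝ) ≤ 2^(J+2) := by
    have h := (Nat.cast_le (α := ℝ)).mpr (aux_sum_pow_mul J)
    push_cast at h
    exact h
  -- bound on V
  have hVbound : V ≤ 8 * (m:ℝ) * t := by
    have h1 : V ≤ ∑ j ∈ Finset.Icc 1 J, (2*(m:ℝ)) * (2^j * s) := by
      apply hRsum σ (fun j => 2^j * s)
      · intro j hj; positivity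
      · intro j hj i hi hig
        rw [hgrp_mem] at hig
        exact hig.2.le
      · intro i hi; exact (hσ i).le
    have h2 : ∑ j ∈ Finset.Icc 1 J, (2*(m:ℝ)) * (2^j * s)
        = (2*(m:ℝ)) * s * ∑ j ∈ Finset.Icc 1 J, (2:ℝ)^j := by
      rw [Finset.mul_sum]
      exact Finset.sum_congr rfl fun j _ => by ring
    have h3 : (2*(m:ℝ)) * s * ∑ j ∈ Finset.Icc 1 J, (2:ℝ)^j
        ≤ (2*(m:ℝ)) * s * 2^(J+1) := by
      apply mul_le_mul_of_nonneg_left hP1 (by positivity)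
    have h4 : (2*(m:ℝ)) * s * 2^(J+1) ≤ 8 * (m:ℝ) * t := by
      have h5 : (2:ℝ)^(J+1) * s ≤ 4*t := hpowJ
      nlinarith [hs, hm2]
    linarith
  have hA5W : A ≤ 5 * W := by nlinarith [hVbound, hmt]
  -- the key log-sum bound over R
  have hLD0 : (0:ℝ) ≤ Real.log A - Real.log (2^J * s) := by
    have h2t : (2:ℝ)^J * s ≤ 2 * t := by
      have hp : (2:ℝ)^(J+1) = 2 * 2^J := by rw [pow_succ]; ring
      nlinarith [hpowJ]
    have : (2:ℝ)^J * s ≤ A := by nlinarith [hm4t, hWA, ht]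
    have := Real.log_le_log (by positivity) this
    linarith
  have hlog2 : (0:ℝ) < Real.log 2 := Real.log_pos (by norm_num)
  have hσA : ∀ i ∈ Gr, σ i ≤ A := fun i hi =>
    Finset.single_le_sum (fun k _ => (hσ k).le) hi
  have hRlog : ∑ i ∈ R, σ i * (Real.log A - Real.log (σ i))
      ≤ 8 * (m:ℝ) * t * ((Real.log A - Real.log (2^J * s)) + 2 * Real.log 2) := by
    set LD := Real.log A - Real.log (2^J * s) with hLD_def
    have h1 : ∑ i ∈ R, σ i * (Real.log A - Real.log (σ i))
        ≤ ∑ j ∈ Finset.Icc 1 J, (2*(m:ℝ)) *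
          (2^j * s * (LD + ((J+1-j : ℕ) : ℝ) * Real.log 2)) := by
      apply hRsum
      · intro j hj
        have : (0:ℝ) ≤ ((J+1-j : ℕ) : ℝ) := by positivity
        have : (0:ℝ) ≤ LD + ((J+1-j : ℕ) : ℝ) * Real.log 2 := by positivity
        positivity
      · intro j hj i hi hig
        rw [Finset.mem_Icc] at hj
        rw [hgrp_mem] at hig
        have hE : Real.log A - Real.log ((2:ℝ)^(j-1) * s)
            = LD + ((J+1-j : ℕ) : ℝ) * Real.log 2 := by
          rw [hLD_def, Real.log_mul (by positivity) hs.ne', Real.log_mul (by positivity) hs.ne',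
            Real.log_pow, Real.log_pow]
          have hc1 : ((J+1-j : ℕ) : ℝ) = (J:ℝ) + 1 - (j:ℝ) := by
            rw [Nat.cast_sub (by omega)]
            push_cast
            ring
          have hc2 : ((j-1 : ℕ) : ℝ) = (j:ℝ) - 1 := by
            rw [Nat.cast_sub (by omega)]
            push_cast
            ring
          rw [hc1, hc2]
          ring
        have hstep : Real.log A - Real.log (σ i) ≤ LD + ((J+1-j : ℕ) : ℝ) * Real.log 2 := by
          rw [← hE]
          have := Real.log_le_log (by positivity) hig.1
          linarith
        have hnn : 0 ≤ Real.log A - Real.log (σ i) := by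
          have := Real.log_le_log (hσ i) (hσA i (hRGr hi))
          linarith
        exact mul_le_mul hig.2.le hstep hnn (by positivity)
      · intro i hi
        apply mul_nonneg (hσ i).le
        have := Real.log_le_log (hσ i) (hσA i (hRGr hi))
        linarith
    have h2 : ∑ j ∈ Finset.Icc 1 J, (2*(m:ℝ)) *
          (2^j * s * (LD + ((J+1-j : ℕ) : ℝ) * Real.log 2))
        = (2*(m:ℝ)) * s * (LD * (∑ j ∈ Finset.Icc 1 J, (2:ℝ)^j)
            + Real.log 2 * (∑ j ∈ Finset.Icc 1 J, (2:ℝ)^j * ((J+1-j : ℕ) : ℝ))) := by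
      rw [Finset.mul_sum, Finset.mul_sum, mul_add, Finset.mul_sum, Finset.mul_sum,
        ← Finset.sum_add_distrib]
      apply Finset.sum_congr rfl
      intro j hj
      rw [show (2*(m:ℝ)) * s * (LD * (2:ℝ)^j) = LD * ((2*(m:ℝ)) * s * (2:ℝ)^j) from by ring]
      ring
    have h3 : (2*(m:ℝ)) * s * (LD * (∑ j ∈ Finset.Icc 1 J, (2:ℝ)^j)
            + Real.log 2 * (∑ j ∈ Finset.Icc 1 J, (2:ℝ)^j * ((J+1-j : ℕ) : ℝ)))
        ≤ (2*(m:ℝ)) * s * (LD * 2^(J+1) + Real.log 2 * 2^(J+2)) := by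
      apply mul_le_mul_of_nonneg_left _ (by positivity)
      apply add_le_add
      · exact mul_le_mul_of_nonneg_left hP1 hLD0
      · exact mul_le_mul_of_nonneg_left hP2 hlog2.le
    have h4 : (2*(m:ℝ)) * s * (LD * 2^(J+1) + Real.log 2 * 2^(J+2))
        = (2*(m:ℝ)) * ((2:ℝ)^(J+1) * s) * (LD + 2 * Real.log 2) := by
      rw [show (2:ℝ)^(J+2) = 2 * 2^(J+1) from by ring]
      ring
    have h5 : (2*(m:ℝ)) * ((2:ℝ)^(J+1) * s) * (LD + 2 * Real.log 2)
        ≤ (2*(m:ℝ)) * (4*t) * (LD + 2 * Real.log 2) := by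
      have hnn : (0:ℝ) ≤ LD + 2 * Real.log 2 := by positivity
      have h6 : (2*(m:ℝ)) * ((2:ℝ)^(J+1) * s) ≤ (2*(m:ℝ)) * (4*t) :=
        mul_le_mul_of_nonneg_left hpowJ (by positivity)
      exact mul_le_mul_of_nonneg_right h6 hnn
    calc ∑ i ∈ R, σ i * (Real.log A - Real.log (σ i))
        ≤ (2*(m:ℝ)) * (4*t) * (LD + 2 * Real.log 2) := by linarith
      _ = 8 * (m:ℝ) * t * (LD + 2 * Real.log 2) := by ring
  -- lower bound on ent L
  obtain ⟨ix, hixL, hix⟩ := Finset.exists_max_image L σ hLne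
  have hconv : ∀ x : ℝ, 0 < x →
      W * Real.negMulLog (x / W) = x * (Real.log W - Real.log x) := by
    intro x hx
    rw [Real.negMulLog, Real.log_div hx.ne' hWpos.ne']
    field_simp
    ring
  have hentL_lb : (2*(m:ℝ)-1) * (t * (Real.log W - Real.log t)) ≤ W * ent L σ := by
    rw [mul_ent L σ (fun i _ => hσ i), ← hW_def, ← Finset.add_sum_erase _ _ hixL]
    have hterm : ∀ i ∈ L.erase ix,
        t * (Real.log W - Real.log t) ≤ σ i * (Real.log W - Real.log (σ i)) := by
      intro i hi
      have hiL := Finset.mem_of_mem_erase hi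
      have h2σ : 2 * σ i ≤ W := by
        have hsum2 : σ ix + ∑ k ∈ L.erase ix, σ k = W := Finset.add_sum_erase _ _ hixL
        have hle : σ i ≤ ∑ k ∈ L.erase ix, σ k :=
          Finset.single_le_sum (fun k _ => (hσ k).le) hi
        have := hix i hiL
        linarith
      have key := aux_negMulLog_mono (a := t / W) (x := σ i / W)
        (by positivity)
        (by rw [div_le_iff₀ hWpos]; linarith [hm4t, ht])
        (by gcongr; exact hit i hiL)
        (by rw [div_le_iff₀ hWpos]; linarith)
      have hmul := mul_le_mul_of_nonneg_left key hWpos.le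
      rw [hconv t ht, hconv (σ i) (hσ i)] at hmul
      exact hmul
    have hsum : (L.erase ix).card • (t * (Real.log W - Real.log t))
        ≤ ∑ i ∈ L.erase ix, σ i * (Real.log W - Real.log (σ i)) :=
      Finset.card_nsmul_le_sum _ _ _ hterm
    have hcarde : (L.erase ix).card = 2*m - 1 := by
      rw [Finset.card_erase_of_mem hixL, hLcard]
    rw [hcarde, nsmul_eq_mul, Nat.cast_sub (by omega : 1 ≤ 2*m)] at hsum
    push_cast at hsum
    have hixnn : 0 ≤ σ ix * (Real.log W - Real.log (σ ix)) := by
      apply mul_nonneg (hσ ix).le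
      have h1 : σ ix ≤ W := Finset.single_le_sum (fun k _ => (hσ k).le) hixL
      have := Real.log_le_log (hσ ix) h1
      linarith
    linarith
  have hentLnn : 0 ≤ ent L σ := ent_nonneg (fun i _ => (hσ i).le)
  -- numeric combination
  have hX : 2 * Real.log 2 ≤ Real.log W - Real.log t := by
    have h4 : Real.log (4*t) ≤ Real.log W := Real.log_le_log (by positivity) (by linarith)
    rw [Real.log_mul (by norm_num) ht.ne'] at h4
    have h5 : Real.log 4 = 2 * Real.log 2 := by
      rw [show (4:ℝ) = 2^2 by norm_num, Real.log_pow]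
      push_cast
      ring
    linarith
  have hY : Real.log A - Real.log t + 2*Real.log 2
      ≤ 5 * (Real.log W - Real.log t) := by
    have h1 : Real.log A ≤ Real.log 5 + Real.log W := by
      have := Real.log_le_log hApos hA5W
      rwa [Real.log_mul (by norm_num) hWpos.ne'] at this
    have h2 : Real.log 5 ≤ 6 * Real.log 2 := by
      have h3 := Real.log_le_log (by norm_num : (0:ℝ) < 5) (by norm_num : (5:ℝ) ≤ 64)
      rw [show (64:ℝ) = 2^6 by norm_num, Real.log_pow] at h3
      push_cast at h3
      linarith
    linarith
  have hRfinal : ∑ i ∈ R, σ i * (Real.log A - Real.log (σ i)) ≤ 32 * (A * ent L σ) := by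
    have hLDt : Real.log A - Real.log (2^J * s) ≤ Real.log A - Real.log t := by
      have := Real.log_le_log ht hJr.le
      linarith
    have hXnn : 0 ≤ Real.log W - Real.log t := by linarith
    have hWentL : W * ent L σ ≤ A * ent L σ := mul_le_mul_of_nonneg_right hWA hentLnn
    have c1 : 8 * (m:ℝ) * t * ((Real.log A - Real.log (2^J * s)) + 2 * Real.log 2)
        ≤ 8 * (m:ℝ) * t * ((Real.log A - Real.log t) + 2 * Real.log 2) := by
      apply mul_le_mul_of_nonneg_left (by linarith) (by positivity)
    have c2 : 8 * (m:ℝ) * t * ((Real.log A - Real.log t) + 2 * Real.log 2)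
        ≤ 8 * (m:ℝ) * t * (5 * (Real.log W - Real.log t)) := by
      apply mul_le_mul_of_nonneg_left hY (by positivity)
    have c3 : 8 * (m:ℝ) * t * (5 * (Real.log W - Real.log t))
        ≤ 32 * ((2*(m:ℝ)-1) * (t * (Real.log W - Real.log t))) := by
      have h0 : 0 ≤ t * (Real.log W - Real.log t) := mul_nonneg ht.le hXnn
      nlinarith [mul_nonneg (by linarith : (0:ℝ) ≤ 24*(m:ℝ) - 32) h0]
    calc ∑ i ∈ R, σ i * (Real.log A - Real.log (σ i))
        ≤ 8 * (m:ℝ) * t * ((Real.log A - Real.log (2^J * s)) + 2 * Real.log 2) := hRlog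
      _ ≤ 32 * ((2*(m:ℝ)-1) * (t * (Real.log W - Real.log t))) := by linarith
      _ ≤ 32 * (W * ent L σ) := by linarith
      _ ≤ 32 * (A * ent L σ) := by linarith
  -- the L part
  have hL1 : W * (Real.log A - Real.log W) ≤ A * Real.log 2 := by
    have h1 : Real.log A - Real.log W = Real.log (A/W) :=
      (Real.log_div hApos.ne' hWpos.ne').symm
    have h2 : Real.log (A/W) ≤ (A/W) / Real.exp 1 := aux_log_le_div_e (by positivity)
    have h3 : W * Real.log (A/W) ≤ A / Real.exp 1 := by
      have h4 := mul_le_mul_of_nonneg_left h2 hWpos.le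
      have h5 : W * ((A/W)/Real.exp 1) = A / Real.exp 1 := by field_simp
      linarith
    have h6 : A / Real.exp 1 ≤ A * Real.log 2 := by
      have he2 : (2:ℝ) ≤ Real.exp 1 := by linarith [Real.add_one_le_exp (1:ℝ)]
      have h7 : A / Real.exp 1 ≤ A / 2 := by
        apply div_le_div_of_nonneg_left hApos.le (by norm_num) he2
      nlinarith [Real.log_two_gt_d9, hApos]
    rw [h1]
    linarith
  -- assemble everything
  rw [← mul_le_mul_iff_right₀ hApos]
  have hGr_split : A * ent Gr σ
      = (∑ i ∈ R, σ i * (Real.log A - Real.log (σ i)))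
        + ∑ i ∈ L, σ i * (Real.log A - Real.log (σ i)) := by
    rw [mul_ent Gr σ (fun i _ => hσ i), ← hA_def, ← Finset.sum_sdiff hLsub, ← hR_def]
  have hLsplit : ∑ i ∈ L, σ i * (Real.log A - Real.log (σ i))
      = W * (Real.log A - Real.log W) + W * ent L σ := by
    have e1 : ∑ i ∈ L, σ i * (Real.log A - Real.log (σ i))
        = (∑ i ∈ L, σ i) * (Real.log A - Real.log W)
          + ∑ i ∈ L, σ i * (Real.log W - Real.log (σ i)) := by
      rw [Finset.sum_mul, ← Finset.sum_add_distrib]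
      exact Finset.sum_congr rfl fun i _ => by ring
    rw [e1, ← hW_def, mul_ent L σ (fun i _ => hσ i), ← hW_def]
  have hWentL : W * ent L σ ≤ A * ent L σ := mul_le_mul_of_nonneg_right hWA hentLnn
  calc A * ent Gr σ
      = (∑ i ∈ R, σ i * (Real.log A - Real.log (σ i)))
        + (W * (Real.log A - Real.log W) + W * ent L σ) := by
        rw [hGr_split, hLsplit]
    _ ≤ 32 * (A * ent L σ) + (A * Real.log 2 + A * ent L σ) := by linarith
    _ = A * (Real.log 2 + 33 * ent L σ) := by ring
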